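/- For the 4-point fully right-decentered Lagrange interpolatory scheme S₄, one has the contractivity estimate sup_k |D(S₄(f))_k| ≤ (1/2)·sup_k |Df_k| for every bounded sequence f. -/
import Mathlib


/-- Second difference operator. -/
def D (f : ℤ → ℝ) (n : ℤ) : ℝ := f (n + 1) - 2 * f n + f (n - 1)

/-- The fully right-decentered 4-point Lagrange interpolatory subdivision scheme:
`S₄(f)_{2n} = f_n`, `S₄(f)_{2n+1} = (f_n+f_{n+1})/2 - (3/16)Df_{n+1} + (1/16)Df_{n+2}`. -/
noncomputable def S4 (f : ℤ → ℝ) (k : ℤ) : ℝ :=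
  if k % 2 = 0 then f (k / 2)
  else (f (k / 2) + f (k / 2 + 1)) / 2 - (3 / 16) * D f (k / 2 + 1) + (1 / 16) * D f (k / 2 + 2)

lemma S4_D_even (f : ℤ → ℝ) (n : ℤ) :
    D (S4 f) (2 * n) = 5 / 16 * D f n - 1 / 8 * D f (n + 1) + 1 / 16 * D f (n + 2) := by
  have e1 : (2 * n + 1) % 2 = 1 := by omega
  have e2 : (2 * n) % 2 = 0 := by omega
  have e3 : (2 * n - 1) % 2 = 1 := by omega
  have d1 : (2 * n + 1) / 2 = n := by omega
  have d2 : (2 * n) / 2 = n := by omega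
  have d3 : (2 * n - 1) / 2 = n - 1 := by omega
  have a1 : n - 1 + 1 = n := by ring
  have a2 : n - 1 + 2 = n + 1 := by ring
  simp only [D, S4, e1, e2, e3, d1, d2, d3, a1, a2]
  norm_num
  ring

lemma S4_D_odd (f : ℤ → ℝ) (n : ℤ) :
    D (S4 f) (2 * n + 1) = 3 / 8 * D f (n + 1) - 1 / 8 * D f (n + 2) := by
  have e1 : (2 * n + 1 + 1) % 2 = 0 := by omega
  have e2 : (2 * n + 1) % 2 = 1 := by omega
  have e3 : (2 * n + 1 - 1) % 2 = 0 := by omega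
  have d1 : (2 * n + 1 + 1) / 2 = n + 1 := by omega
  have d2 : (2 * n + 1) / 2 = n := by omega
  have d3 : (2 * n + 1 - 1) / 2 = n := by omega
  simp only [D, S4, e1, e2, e3, d1, d2, d3]
  norm_num
  ring

theorem S4_contractive (f : ℤ → ℝ) (hf : ∃ C, ∀ n, |f n| ≤ C) :
    (⨆ k, |D (S4 f) k|) ≤ (1 / 2) * ⨆ k, |D f k| := by
  obtain ⟨C, hC⟩ := hf
  have hbdd : BddAbove (Set.range fun k => |D f k|) := by
    refine ⟨4 * C, ?_⟩
    rintro x ⟨n, rfl⟩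
    have h1 := hC (n + 1); have h2 := hC n; have h3 := hC (n - 1)
    have := abs_le.mp h1; have := abs_le.mp h2; have := abs_le.mp h3
    simp only [D]
    rw [abs_le]; constructor <;> [linarith; linarith]
  have hM : ∀ n, |D f n| ≤ ⨆ k, |D f k| := fun n => le_ciSup hbdd n
  set M := ⨆ k, |D f k| with hMdef
  apply ciSup_le
  intro k
  rcases Int.even_or_odd k with ⟨n, rfl⟩ | ⟨n, rfl⟩
  · have hk : n + n = 2 * n := by ring
    rw [hk, S4_D_even]
    have ha := abs_le.mp (hM n)
    have hb := abs_le.mp (hM (n + 1))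
    have hc := abs_le.mp (hM (n + 2))
    rw [abs_le]; constructor <;> [linarith; linarith]
  · rw [S4_D_odd]
    have hb := abs_le.mp (hM (n + 1))
    have hc := abs_le.mp (hM (n + 2))
    rw [abs_le]; constructor <;> [linarith; linarith]
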